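/- Let I be a nonempty proper arc of [n], let σ_I be the permutation of [n] that reverses I, and let J ⊆ [n] be an arc. Then I ⋔* J if and only if the image σ_I(J) = {σ_I(x) : x ∈ J} is not an arc of [n]. -/

import Mathlib

open Fin.NatCast in
/-- The arc `{a, a+1, …, a+k}` (mod `n`) of `Fin n`. -/
def arcSet (n : ℕ) [NeZero n] (a : Fin n) (k : ℕ) : Set (Fin n) :=
  {x | ∃ t : ℕ, t ≤ k ∧ x = a + (t : Fin n)}

/-- `A` is an arc of `Fin n`. -/
def IsArc (n : ℕ) [NeZero n] (A : Set (Fin n)) : Prop :=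
  A.Nonempty ∧ ∃ (a : Fin n) (k : ℕ), k ≤ n - 1 ∧ A = arcSet n a k

/-- Two arcs strictly overlap. -/
def StrictOverlap {n : ℕ} (I J : Set (Fin n)) : Prop :=
  ¬ I ⊆ J ∧ ¬ J ⊆ I ∧ ¬ Iᶜ ⊆ J ∧ ¬ J ⊆ Iᶜ

open Classical in
open Fin.NatCast in
/-- The permutation of `Fin n` reversing the arc `{a, …, a+k}`: it sends `a + t`
to `a + (k - t)` for `t ≤ k` and fixes everything outside the arc. -/
noncomputable def arcRev (n : ℕ) [NeZero n] (a : Fin n) (k : ℕ) (x : Fin n) : Fin n :=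
  if (∃ t : ℕ, t ≤ k ∧ x = a + (t : Fin n)) then a + (k : Fin n) - (x - a) else x

section Helpers

variable {n : ℕ} [NeZero n]

open Fin.NatCast Fin.CommRing

lemma val_sub (u v : Fin n) :
    (u - v).val = if v.val ≤ u.val then u.val - v.val else u.val + n - v.val := by
  have hu := u.is_lt; have hv := v.is_lt
  rw [Fin.sub_def]
  show (n - v.val + u.val) % n = _
  split_ifs with h
  · have h2 : n - v.val + u.val = n + (u.val - v.val) := by omega
    rw [h2, Nat.add_mod_left, Nat.mod_eq_of_lt (by omega)]
  · rw [Nat.mod_eq_of_lt (by omega)]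
    omega

lemma mem_arcSet {a : Fin n} {k : ℕ} {x : Fin n} :
    x ∈ arcSet n a k ↔ (x - a).val ≤ k := by
  constructor
  · rintro ⟨t, ht, rfl⟩
    rw [add_sub_cancel_left]
    calc ((t : Fin n)).val = t % n := by simp [Fin.val_natCast]
    _ ≤ t := Nat.mod_le t n
    _ ≤ k := ht
  · intro h
    exact ⟨(x - a).val, h, by rw [Fin.cast_val_eq_self]; ring⟩

lemma self_mem_arcSet (a : Fin n) (k : ℕ) : a ∈ arcSet n a k :=
  mem_arcSet.mpr (by simp)

lemma isArc_arcSet (e : Fin n) {l : ℕ} (hl : l ≤ n - 1) : IsArc n (arcSet n e l) :=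
  ⟨⟨e, self_mem_arcSet e l⟩, e, l, hl, rfl⟩

lemma coordMem (a b : Fin n) (m : ℕ) (x : Fin n) :
    x ∈ arcSet n b m ↔
      ((b - a).val ≤ (x - a).val ∧ (x - a).val ≤ (b - a).val + m) ∨
        (x - a).val + n ≤ (b - a).val + m := by
  rw [mem_arcSet]
  have h : x - b = (x - a) - (b - a) := by ring
  rw [h, val_sub]
  have h1 := (x - a).is_lt; have h2 := (b - a).is_lt
  split_ifs with h3 <;> omega

lemma coord_add (a : Fin n) {t : ℕ} (ht : t < n) : (a + (t : Fin n) - a).val = t := by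
  rw [add_sub_cancel_left, Fin.val_cast_of_lt ht]

lemma arcRev_of_mem {a : Fin n} {k : ℕ} {x : Fin n} (h : (x - a).val ≤ k) :
    arcRev n a k x = a + (k : Fin n) - (x - a) := by
  rw [arcRev]
  exact if_pos (mem_arcSet.mpr h)

lemma arcRev_of_not_mem {a : Fin n} {k : ℕ} {x : Fin n} (h : k < (x - a).val) :
    arcRev n a k x = x := by
  rw [arcRev]
  exact if_neg (fun hc => absurd (mem_arcSet.mp hc) (by omega))

lemma arcRev_coord {a : Fin n} {k : ℕ} (hk : k < n) {x : Fin n} (h : (x - a).val ≤ k) :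
    (arcRev n a k x - a).val = k - (x - a).val := by
  rw [arcRev_of_mem h]
  have h2 : a + (k : Fin n) - (x - a) - a = (k : Fin n) - (x - a) := by ring
  rw [h2, val_sub, Fin.val_cast_of_lt hk, if_pos h]

lemma arcRev_involutive (a : Fin n) {k : ℕ} (hk : k < n) :
    Function.Involutive (arcRev n a k) := by
  intro x
  by_cases h : (x - a).val ≤ k
  · have h2 : (arcRev n a k x - a).val ≤ k := by rw [arcRev_coord hk h]; omega
    rw [arcRev_of_mem h2, arcRev_of_mem h]; ring
  · have h' : arcRev n a k x = x := arcRev_of_not_mem (by omega)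
    rw [h', h']

lemma compl_arcSet (hn : 2 ≤ n) (b : Fin n) {m : ℕ} (hm : m ≤ n - 2) :
    (arcSet n b m)ᶜ = arcSet n (b + ((m + 1 : ℕ) : Fin n)) (n - 2 - m) := by
  ext x
  simp only [Set.mem_compl_iff]
  rw [mem_arcSet, mem_arcSet]
  have h : x - (b + ((m + 1 : ℕ) : Fin n)) = (x - b) - ((m + 1 : ℕ) : Fin n) := by ring
  rw [h, val_sub (x - b) ((m + 1 : ℕ) : Fin n), Fin.val_cast_of_lt (show m + 1 < n by omega)]
  have := (x - b).is_lt
  split_ifs <;> omega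

lemma image_rev_of_subset (a : Fin n) {k : ℕ} (hk : k < n) (b : Fin n) {m : ℕ} (hm : m < n)
    (hsub : arcSet n b m ⊆ arcSet n a k) :
    arcRev n a k '' arcSet n b m
      = arcSet n (a + (k : Fin n) - (b - a) - (m : Fin n)) m := by
  ext x
  constructor
  · rintro ⟨y, ⟨s, hs, rfl⟩, rfl⟩
    refine ⟨m - s, by omega, ?_⟩
    have hy : (b + (s : Fin n) - a).val ≤ k := mem_arcSet.mp (hsub ⟨s, hs, rfl⟩)
    rw [arcRev_of_mem hy]
    have h1 : ((m - s : ℕ) : Fin n) = (m : Fin n) - (s : Fin n) := Nat.cast_sub hs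
    rw [h1]; ring
  · rintro ⟨t, ht, rfl⟩
    refine ⟨b + ((m - t : ℕ) : Fin n), ⟨m - t, by omega, rfl⟩, ?_⟩
    have hy : (b + ((m - t : ℕ) : Fin n) - a).val ≤ k :=
      mem_arcSet.mp (hsub ⟨m - t, by omega, rfl⟩)
    rw [arcRev_of_mem hy]
    have h1 : ((m - t : ℕ) : Fin n) = (m : Fin n) - (t : Fin n) := Nat.cast_sub (by omega)
    rw [h1]; ring

lemma image_rev_of_superset (a : Fin n) {k : ℕ} (hk : k < n) {J : Set (Fin n)}
    (hIJ : arcSet n a k ⊆ J) : arcRev n a k '' J = J := by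
  ext x
  constructor
  · rintro ⟨y, hy, rfl⟩
    by_cases h : (y - a).val ≤ k
    · exact hIJ (mem_arcSet.mpr (by rw [arcRev_coord hk h]; omega))
    · rwa [arcRev_of_not_mem (by omega)]
  · intro hx
    by_cases h : (x - a).val ≤ k
    · exact ⟨arcRev n a k x, hIJ (mem_arcSet.mpr (by rw [arcRev_coord hk h]; omega)),
        arcRev_involutive a hk x⟩
    · exact ⟨x, hx, arcRev_of_not_mem (by omega)⟩

lemma image_rev_of_disjoint (a : Fin n) (k : ℕ) {J : Set (Fin n)}
    (h : ∀ x ∈ J, k < (x - a).val) : arcRev n a k '' J = J := by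
  have h2 : ∀ x ∈ J, arcRev n a k x = x := fun x hx => arcRev_of_not_mem (h x hx)
  ext x
  constructor
  · rintro ⟨y, hy, rfl⟩; rwa [h2 y hy]
  · intro hx; exact ⟨x, hx, h2 x hx⟩

lemma arc_descent {A : Set (Fin n)} (hA : IsArc n A) {x y : Fin n}
    (hx : x ∈ A) (hx1 : x + 1 ∉ A) (hy : y ∈ A) (hy1 : y + 1 ∉ A) : x = y := by
  obtain ⟨-, e, l, hl, rfl⟩ := hA
  rcases Nat.lt_or_ge n 2 with hn | hn
  · have h1 := NeZero.pos n
    have h2 := x.is_lt; have h3 := y.is_lt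
    exact Fin.ext (by omega)
  · have hone : ((1 : Fin n)).val = 1 := by
      rw [show (1 : Fin n) = ((1 : ℕ) : Fin n) by norm_cast, Fin.val_cast_of_lt (by omega)]
    have key : ∀ z : Fin n, z ∈ arcSet n e l → z + 1 ∉ arcSet n e l → (z - e).val = l := by
      intro z hz hz1
      rw [mem_arcSet] at hz hz1
      have h4 : z + 1 - e = (z - e) + 1 := by ring
      rw [h4] at hz1
      have h5 : ((z - e) + 1).val = ((z - e).val + 1) % n := by rw [Fin.add_def, hone]
      have h6 := (z - e).is_lt
      have h7 : ((z - e).val + 1) % n = if (z - e).val + 1 = n then 0 else (z - e).val + 1 := by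
        split_ifs with h
        · rw [h, Nat.mod_self]
        · exact Nat.mod_eq_of_lt (by omega)
      rw [h5, h7] at hz1
      split_ifs at hz1 <;> omega
    have hx' := key x hx hx1
    have hy' := key y hy hy1
    exact sub_left_inj.mp (Fin.ext (hx'.trans hy'.symm))

lemma forward_dir (a : Fin n) {k : ℕ} (hk : k ≤ n - 2) (b : Fin n) {m : ℕ} (hm : m ≤ n - 1)
    (hSO : StrictOverlap (arcSet n a k) (arcSet n b m)) :
    ¬ IsArc n (arcRev n a k '' arcSet n b m) := by
  intro hA
  obtain ⟨h1, h2, h3, h4⟩ := hSO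
  have hn := NeZero.pos n
  have hkn : k < n := by omega
  set c := (b - a).val with hc
  have hcn : c < n := (b - a).is_lt
  -- extract coordinate witnesses
  obtain ⟨x1, hx1J, hx1I⟩ := Set.not_subset.mp h4
  rw [Set.mem_compl_iff, not_not, mem_arcSet] at hx1I
  rw [coordMem a b m x1] at hx1J
  have hu1n := (x1 - a).is_lt
  obtain ⟨x2, hx2J, hx2I⟩ := Set.not_subset.mp h2
  rw [mem_arcSet] at hx2I
  rw [coordMem a b m x2] at hx2J
  have hu2n := (x2 - a).is_lt
  obtain ⟨x3, hx3I, hx3J⟩ := Set.not_subset.mp h1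
  rw [mem_arcSet] at hx3I
  rw [coordMem a b m x3] at hx3J
  have hu3n := (x3 - a).is_lt
  obtain ⟨x4, hx4I, hx4J⟩ := Set.not_subset.mp h3
  rw [Set.mem_compl_iff, mem_arcSet] at hx4I
  rw [coordMem a b m x4] at hx4J
  have hu4n := (x4 - a).is_lt
  by_cases hQk : (c ≤ k ∧ k ≤ c + m) ∨ k + n ≤ c + m
  · -- Case B : a + k ∈ J, a ∉ J
    have hfacts : 1 ≤ c ∧ c + m ≤ n - 2 ∧ c ≤ k ∧ k + 1 ≤ c + m := by omega
    obtain ⟨hf1, hf2, hf3, hf4⟩ := hfacts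
    set d1 : Fin n := a + ((k - c : ℕ) : Fin n) with hd1
    set d2 : Fin n := a + ((c + m : ℕ) : Fin n) with hd2
    have hd1mem : d1 ∈ arcRev n a k '' arcSet n b m := by
      refine ⟨b, (coordMem a b m b).mpr (by omega), ?_⟩
      rw [arcRev_of_mem (show (b - a).val ≤ k by omega)]
      have hcast : ((k - c : ℕ) : Fin n) = (k : Fin n) - ((c : ℕ) : Fin n) := Nat.cast_sub hf3
      rw [hd1, hcast, hc, Fin.cast_val_eq_self]
      ring
    have hd11 : d1 + 1 ∉ arcRev n a k '' arcSet n b m := by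
      rintro ⟨x, hxJ, hσ⟩
      rw [coordMem a b m x] at hxJ
      have hxn := (x - a).is_lt
      have hd1e : d1 + 1 = a + ((k - c + 1 : ℕ) : Fin n) := by rw [hd1]; push_cast; ring
      have hcoord : (d1 + 1 - a).val = k - c + 1 := by rw [hd1e, coord_add a (by omega)]
      by_cases h : (x - a).val ≤ k
      · have := arcRev_coord hkn h
        rw [hσ] at this
        rw [hcoord] at this
        omega
      · rw [arcRev_of_not_mem (by omega)] at hσ
        have : (x - a).val = k - c + 1 := by rw [hσ]; exact hcoord
        omega
    have hd2mem : d2 ∈ arcRev n a k '' arcSet n b m := by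
      refine ⟨d2, (coordMem a b m d2).mpr ?_, ?_⟩
      · rw [hd2, coord_add a (by omega)]; omega
      · exact arcRev_of_not_mem (by rw [hd2, coord_add a (by omega)]; omega)
    have hd21 : d2 + 1 ∉ arcRev n a k '' arcSet n b m := by
      rintro ⟨x, hxJ, hσ⟩
      rw [coordMem a b m x] at hxJ
      have hxn := (x - a).is_lt
      have hd2e : d2 + 1 = a + ((c + m + 1 : ℕ) : Fin n) := by rw [hd2]; push_cast; ring
      have hcoord : (d2 + 1 - a).val = c + m + 1 := by rw [hd2e, coord_add a (by omega)]
      by_cases h : (x - a).val ≤ k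
      · have := arcRev_coord hkn h
        rw [hσ, hcoord] at this
        omega
      · rw [arcRev_of_not_mem (by omega)] at hσ
        have : (x - a).val = c + m + 1 := by rw [hσ]; exact hcoord
        omega
    have heq := arc_descent hA hd1mem hd11 hd2mem hd21
    have : (d1 - a).val = (d2 - a).val := by rw [heq]
    rw [hd1, hd2, coord_add a (by omega), coord_add a (by omega)] at this
    omega
  · -- Case A : a ∈ J, a + k ∉ J
    have hQ0 : (c ≤ 0 ∧ 0 ≤ c + m) ∨ 0 + n ≤ c + m := by omega
    have hfacts : n ≤ c + m ∧ k + 2 ≤ c ∧ c + m ≤ n + k - 1 := by omega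
    obtain ⟨hf1, hf2, hf3⟩ := hfacts
    set d1 : Fin n := a + ((k : ℕ) : Fin n) with hd1
    set d2 : Fin n := a + ((n - 1 : ℕ) : Fin n) with hd2
    have hd1mem : d1 ∈ arcRev n a k '' arcSet n b m := by
      refine ⟨a, (coordMem a b m a).mpr (by simp; omega), ?_⟩
      rw [arcRev_of_mem (show (a - a).val ≤ k by simp)]
      rw [hd1]; simp
    have hd11 : d1 + 1 ∉ arcRev n a k '' arcSet n b m := by
      rintro ⟨x, hxJ, hσ⟩
      rw [coordMem a b m x] at hxJ
      have hxn := (x - a).is_lt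
      have hd1e : d1 + 1 = a + ((k + 1 : ℕ) : Fin n) := by rw [hd1]; push_cast; ring
      have hcoord : (d1 + 1 - a).val = k + 1 := by rw [hd1e, coord_add a (by omega)]
      by_cases h : (x - a).val ≤ k
      · have := arcRev_coord hkn h
        rw [hσ, hcoord] at this
        omega
      · rw [arcRev_of_not_mem (by omega)] at hσ
        have : (x - a).val = k + 1 := by rw [hσ]; exact hcoord
        omega
    have hd2mem : d2 ∈ arcRev n a k '' arcSet n b m := by
      refine ⟨d2, (coordMem a b m d2).mpr ?_, ?_⟩
      · rw [hd2, coord_add a (by omega)]; omega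
      · exact arcRev_of_not_mem (by rw [hd2, coord_add a (by omega)]; omega)
    have hd21 : d2 + 1 ∉ arcRev n a k '' arcSet n b m := by
      rintro ⟨x, hxJ, hσ⟩
      rw [coordMem a b m x] at hxJ
      have hxn := (x - a).is_lt
      have hd2e : d2 + 1 = a := by
        rw [hd2]
        have h6 : ((n - 1 : ℕ) : Fin n) + 1 = ((n - 1 + 1 : ℕ) : Fin n) := by push_cast; ring
        have h7 : (n - 1 + 1 : ℕ) = n := by omega
        rw [add_assoc, h6, h7, Fin.natCast_self, add_zero]
      rw [hd2e] at hσ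
      by_cases h : (x - a).val ≤ k
      · have := arcRev_coord hkn h
        rw [hσ] at this
        simp at this
        omega
      · rw [arcRev_of_not_mem (by omega)] at hσ
        have : (x - a).val = 0 := by rw [hσ]; simp
        omega
    have heq := arc_descent hA hd1mem hd11 hd2mem hd21
    have : (d1 - a).val = (d2 - a).val := by rw [heq]
    rw [hd1, hd2, coord_add a (by omega), coord_add a (by omega)] at this
    omega

end Helpers

/-- A proper arc `I` strictly overlaps an arc `J` iff reversing `I` destroys the
arc `J`, i.e. the image of `J` under the reversal of `I` is not an arc. -/
theorem statement9 (n : ℕ) [NeZero n] (a : Fin n) (k : ℕ) (hk : k ≤ n - 2)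
    (J : Set (Fin n)) (hJ : IsArc n J) :
    StrictOverlap (arcSet n a k) J ↔ ¬ IsArc n (arcRev n a k '' J) := by
  obtain ⟨hJne, b, m, hm, rfl⟩ := hJ
  have hn := NeZero.pos n
  have hkn : k < n := by omega
  have hmn : m < n := by omega
  constructor
  · intro hSO
    exact forward_dir a hk b hm hSO
  · intro hnot
    by_contra hSO
    apply hnot
    by_cases hIJ : arcSet n a k ⊆ arcSet n b m
    · rw [image_rev_of_superset a hkn hIJ]
      exact isArc_arcSet b hm
    by_cases hJI : arcSet n b m ⊆ arcSet n a k
    · rw [image_rev_of_subset a hkn b hmn hJI]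
      exact isArc_arcSet _ hm
    by_cases hci : (arcSet n a k)ᶜ ⊆ arcSet n b m
    · rcases Nat.lt_or_ge n 2 with hn2 | hn2
      · exact absurd (fun x _ => by
          have h2 := x.is_lt; have h3 := b.is_lt
          have : x = b := Fin.ext (by omega)
          rw [this]; exact self_mem_arcSet b m) hIJ
      · have hm2 : m ≤ n - 2 := by
          by_contra h
          exact hIJ (fun x _ => mem_arcSet.mpr (by have := (x - b).is_lt; omega))
        have hbij := (arcRev_involutive a hkn).bijective
        have himg : arcRev n a k '' arcSet n b m
            = (arcRev n a k '' (arcSet n b m)ᶜ)ᶜ := by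
          rw [Set.image_compl_eq hbij, compl_compl]
        rw [himg, compl_arcSet hn2 b hm2,
          image_rev_of_subset a hkn _ (show n - 2 - m < n by omega)
            (by rw [← compl_arcSet hn2 b hm2]; exact Set.compl_subset_comm.mp hci),
          compl_arcSet hn2 _ (show n - 2 - m ≤ n - 2 by omega)]
        exact isArc_arcSet _ (by omega)
    by_cases hd : arcSet n b m ⊆ (arcSet n a k)ᶜ
    · rw [image_rev_of_disjoint a k (fun x hx => by
        have h5 := hd hx
        rw [Set.mem_compl_iff, mem_arcSet] at h5
        omega)]
      exact isArc_arcSet b hm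
    exact absurd ⟨hIJ, hJI, hci, hd⟩ hSO
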